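/- arXiv:2509.25921 — 3 statements merged into one kernel-verified Lean document; each statement's English description precedes it below -/
import Mathlib

section
/- Under the assumptions that (i) $w_i u_i(a) < 1$ for all $i,a$, (ii) $W$ has a unique maximizer $a^*$ on $A_\lambda$, and (iii) $\epsilon < (M+\delta)^{-1/\Delta_1}$ for some $\delta > 0$, where $M = |A_\lambda|$ and $\Delta_1 = W(a^*) - \max_{a \in A_\lambda, a \neq a^*} W(a)$, the separation inequality $\theta(a^*) - \xi > \sum_{a \in A_\lambda, a \neq a^*} (\theta(a) + \xi)$ holds, where $\xi = \frac{\delta}{|A| M} \epsilon^{n - \max_{a \neq a^*, a \in A_\lambda} W(a)}$. -/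
open Finset
open scoped Classical

/-- Lemma 1, separation: under Assumption 1 (i)-(iii), with
`M = |A_λ|`, `Δ₁ = W(a*) - max_{a ∈ A_λ, a ≠ a*} W(a)` and
`ξ = (δ/(|A| M)) ε^(n - max_{a ≠ a*} W(a))`, we have
`θ(a*) - ξ > ∑_{a ∈ A_λ, a ≠ a*} (θ(a) + ξ)`. -/
theorem sbcpe_separation_lemma
    {n : ℕ} (hn : 0 < n)
    (A : Fin n → Type*) [∀ i, Fintype (A i)] [∀ i, Nonempty (A i)]
    (u : Fin n → (∀ i, A i) → ℝ) (w : Fin n → ℝ) (lam : Fin n → ℝ)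
    (hw : ∀ i, 0 < w i)
    (ε : ℝ) (hε0 : 0 < ε) (hε1 : ε < 1)
    (W : (∀ i, A i) → ℝ) (hW : ∀ a, W a = ∑ i, w i * u i a)
    (Alam : Finset (∀ i, A i))
    (hAlam : ∀ a, a ∈ Alam ↔ ∀ i, lam i < u i a)
    (θ : (∀ i, A i) → ℝ)
    (hθ : ∀ a, θ a =
      if a ∈ Alam then ε ^ ((n : ℝ) - W a) / (Fintype.card (∀ i, A i) : ℝ) else 0)
    (hbound : ∀ i a, w i * u i a < 1)
    (astar : ∀ i, A i) (hstar : astar ∈ Alam)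
    (hmax : ∀ a ∈ Alam, a ≠ astar → W a < W astar)
    (M : ℕ) (hM : M = Alam.card) (hM2 : 2 ≤ M)
    (W2 : ℝ) (hW2ub : ∀ a ∈ Alam.erase astar, W a ≤ W2)
    (hW2mem : ∃ a ∈ Alam.erase astar, W a = W2)
    (Δ₁ : ℝ) (hΔ₁ : Δ₁ = W astar - W2)
    (δ : ℝ) (hδ : 0 < δ)
    (hεsmall : ε < ((M : ℝ) + δ) ^ (-(1 / Δ₁)))
    (ξ : ℝ)
    (hξ : ξ = δ / ((Fintype.card (∀ i, A i) : ℝ) * M) * ε ^ ((n : ℝ) - W2)) :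
    θ astar - ξ > ∑ a ∈ Alam.erase astar, (θ a + ξ) := by
  set C : ℝ := (Fintype.card (∀ i, A i) : ℝ) with hC
  have hCpos : 0 < C := by
    have h : 0 < Fintype.card (∀ i, A i) := Fintype.card_pos
    rw [hC]; exact_mod_cast h
  obtain ⟨b, hb, hbW⟩ := hW2mem
  have hΔpos : 0 < Δ₁ := by
    have := hmax b (Finset.mem_of_mem_erase hb) (Finset.ne_of_mem_erase hb)
    rw [hΔ₁, ← hbW]; linarith
  have hMpos : (0:ℝ) < M := by positivity
  have hMδ : (0:ℝ) < (M:ℝ) + δ := by positivity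
  -- key: ε ^ (-Δ₁) > M + δ
  have hkey : (M:ℝ) + δ < ε ^ (-Δ₁) := by
    have h1 : (((M:ℝ) + δ) ^ (-(1/Δ₁))) ^ (-Δ₁) < ε ^ (-Δ₁) :=
      Real.rpow_lt_rpow_of_neg hε0 hεsmall (by linarith)
    rw [← Real.rpow_mul hMδ.le] at h1
    have : -(1/Δ₁) * -Δ₁ = 1 := by field_simp
    rwa [this, Real.rpow_one] at h1
  set t : ℝ := ε ^ ((n:ℝ) - W2) with ht
  have htpos : 0 < t := Real.rpow_pos_of_pos hε0 _
  have hθstar : θ astar = t * ε ^ (-Δ₁) / C := by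
    rw [hθ, if_pos hstar, ht, ← Real.rpow_add hε0]
    congr 2
    rw [hΔ₁]; ring
  have hθle : ∀ a ∈ Alam.erase astar, θ a ≤ t / C := by
    intro a ha
    rw [hθ, if_pos (Finset.mem_of_mem_erase ha)]
    have hle : ε ^ ((n:ℝ) - W a) ≤ t :=
      Real.rpow_le_rpow_of_exponent_ge hε0 hε1.le (by linarith [hW2ub a ha])
    gcongr
  have hcard : ((Alam.erase astar).card : ℝ) = (M:ℝ) - 1 := by
    rw [Finset.card_erase_of_mem hstar, ← hM]
    have : 1 ≤ M := by omega
    push_cast [Nat.cast_sub this]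
    ring
  have hsum : ∑ a ∈ Alam.erase astar, (θ a + ξ) ≤ ((M:ℝ) - 1) * (t / C + ξ) := by
    rw [← hcard]
    calc ∑ a ∈ Alam.erase astar, (θ a + ξ)
        ≤ ∑ _a ∈ Alam.erase astar, (t / C + ξ) :=
          Finset.sum_le_sum (fun a ha => by linarith [hθle a ha])
      _ = ((Alam.erase astar).card : ℝ) * (t / C + ξ) := by
          rw [Finset.sum_const, nsmul_eq_mul]
  have hξval : ξ = δ / (C * M) * t := by rw [hξ]
  have hM1 : (2:ℝ) ≤ (M:ℝ) := by exact_mod_cast hM2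
  have hgoal : ((M:ℝ) - 1) * (t / C + ξ) < θ astar - ξ := by
    rw [hθstar, hξval]
    have hs1 : δ / (C * ↑M) * t = δ * (t / C) / M := by
      field_simp
    have hs2 : t * ε ^ (-Δ₁) / C = (t / C) * ε ^ (-Δ₁) := by ring
    rw [hs1, hs2]
    set s := t / C with hsdef
    have hspos : 0 < s := div_pos htpos hCpos
    have h1 : s * ((M:ℝ) + δ) < s * ε ^ (-Δ₁) := mul_lt_mul_of_pos_left hkey hspos
    have hr : δ * s / M * M = δ * s := div_mul_cancel₀ _ hMpos.ne'
    nlinarith [hr, h1, hspos, hMpos]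
  linarith [hsum]
end

section
/- Suppose $\theta : A \to [0,\infty)$ satisfies $\theta(a^*) - \xi > \sum_{a \neq a^*}(\theta(a) + \xi)$ for some $\xi > 0$ and a distinguished joint action $a^* \in A = \prod_{i=1}^n A_i$. If $\widehat\theta : A \to [0,\infty)$ satisfies $|\widehat\theta(a) - \theta(a)| < \xi$ for all $a \in A$, then for every agent $i$, the marginal $\widehat\theta_i(a_i) = \sum_{a : a_i \text{-component} = a_i} \widehat\theta(a)$ is uniquely maximized at $a_i^*$ (the $i$-th component of $a^*$); consequently the profile of local argmaxes equals $a^*$. -/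
open Finset
open scoped Classical

/-- Proposition 1: if `θ(a*) - ξ > ∑_{a ≠ a*}(θ(a) + ξ)` and
`|θ̂(a) - θ(a)| < ξ` for all `a`, then for every agent `i` the marginal
`θ̂ᵢ(aᵢ) = ∑_{a : aᵢ-component = aᵢ} θ̂(a)` is uniquely maximized at `a*ᵢ`;
consequently the profile of local argmaxes equals `a*`. -/
theorem sbcpe_marginal_argmax_eq_joint
    {n : ℕ} (A : Fin n → Type*) [∀ i, Fintype (A i)] [∀ i, Nonempty (A i)]
    (θ θhat : (∀ i, A i) → ℝ)
    (hθ0 : ∀ a, 0 ≤ θ a) (hθhat0 : ∀ a, 0 ≤ θhat a)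
    (astar : ∀ i, A i) (ξ : ℝ) (hξ : 0 < ξ)
    (hsep : θ astar - ξ > ∑ a ∈ univ.filter (fun a => a ≠ astar), (θ a + ξ))
    (hest : ∀ a, |θhat a - θ a| < ξ) :
    (∀ i, ∀ b : A i, b ≠ astar i →
      ∑ a ∈ univ.filter (fun a => a i = b), θhat a
        < ∑ a ∈ univ.filter (fun a => a i = astar i), θhat a) ∧
    (∀ abar : ∀ i, A i,
      (∀ i, ∀ b : A i,
        ∑ a ∈ univ.filter (fun a => a i = b), θhat a
          ≤ ∑ a ∈ univ.filter (fun a => a i = abar i), θhat a) →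
      abar = astar) := by
  have hS : ∑ a ∈ univ.filter (fun a => a ≠ astar), θhat a < θhat astar := by
    have h1 : ∑ a ∈ univ.filter (fun a => a ≠ astar), θhat a
        ≤ ∑ a ∈ univ.filter (fun a => a ≠ astar), (θ a + ξ) := by
      apply Finset.sum_le_sum
      intro a _
      have := abs_lt.mp (hest a)
      linarith [this.2]
    have h2 : θ astar - ξ < θhat astar := by
      have := abs_lt.mp (hest astar)
      linarith [this.1]
    linarith
  have key : ∀ i, ∀ b : A i, b ≠ astar i →
      ∑ a ∈ univ.filter (fun a => a i = b), θhat a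
        < ∑ a ∈ univ.filter (fun a => a i = astar i), θhat a := by
    intro i b hb
    have hsub : (univ.filter (fun a : ∀ j, A j => a i = b))
        ⊆ univ.filter (fun a => a ≠ astar) := by
      intro a ha
      simp only [mem_filter, mem_univ, true_and] at ha ⊢
      intro h; rw [h] at ha; exact hb ha.symm
    have hle : ∑ a ∈ univ.filter (fun a : ∀ j, A j => a i = b), θhat a
        ≤ ∑ a ∈ univ.filter (fun a => a ≠ astar), θhat a :=
      Finset.sum_le_sum_of_subset_of_nonneg hsub (fun a _ _ => hθhat0 a)
    have hmem : astar ∈ univ.filter (fun a : ∀ j, A j => a i = astar i) := by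
      simp
    have hge : θhat astar ≤ ∑ a ∈ univ.filter (fun a : ∀ j, A j => a i = astar i), θhat a :=
      Finset.single_le_sum (fun a _ => hθhat0 a) hmem
    linarith
  refine ⟨key, fun abar hmax => ?_⟩
  funext i
  by_contra h
  exact absurd (hmax i (astar i)) (not_le.mpr (key i (abar i) h))
end

section
/- Let $\widehat\theta(a^*) > \theta(a^*) - \xi$ and $\widehat\theta(a) < \theta(a) + \xi$ for all $a \neq a^*$, and assume $\theta(a^*) - \xi > \sum_{a \neq a^*}(\theta(a)+\xi)$. Then for any agent $i$ and any $\tilde a_i \neq a_i^*$, $\widehat\theta_i(a_i^*) > \widehat\theta_i(\tilde a_i)$, i.e., the marginal at the optimal component strictly exceeds the marginal at any other component. -/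
open Finset
open scoped Classical

/-- if `θ̂(a*) > θ(a*) - ξ`, `θ̂(a) < θ(a) + ξ` for all `a ≠ a*`, and
`θ(a*) - ξ > ∑_{a ≠ a*}(θ(a) + ξ)`, then for any agent `i` and any `ãᵢ ≠ a*ᵢ`, the
marginal satisfies `θ̂ᵢ(a*ᵢ) > θ̂ᵢ(ãᵢ)`. -/
theorem sbcpe_marginal_dominance
    {n : ℕ} (A : Fin n → Type*) [∀ i, Fintype (A i)] [∀ i, Nonempty (A i)]
    (θ θhat : (∀ i, A i) → ℝ)
    (hθ0 : ∀ a, 0 ≤ θ a) (hθhat0 : ∀ a, 0 ≤ θhat a)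
    (astar : ∀ i, A i) (ξ : ℝ) (hξ : 0 < ξ)
    (hlow : θhat astar > θ astar - ξ)
    (hup : ∀ a, a ≠ astar → θhat a < θ a + ξ)
    (hsep : θ astar - ξ > ∑ a ∈ univ.filter (fun a => a ≠ astar), (θ a + ξ)) :
    ∀ i, ∀ atilde : A i, atilde ≠ astar i →
      ∑ a ∈ univ.filter (fun a => a i = astar i), θhat a
        > ∑ a ∈ univ.filter (fun a => a i = atilde), θhat a := by
  intro i atilde hne
  have h1 : ∑ a ∈ univ.filter (fun a => a i = atilde), θhat a
      ≤ ∑ a ∈ univ.filter (fun a => a i = atilde), (θ a + ξ) := by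
    apply Finset.sum_le_sum
    intro a ha
    simp only [mem_filter] at ha
    have : a ≠ astar := fun h => hne (ha.2 ▸ congrFun h i)
    exact le_of_lt (hup a this)
  have h2 : ∑ a ∈ univ.filter (fun a => a i = atilde), (θ a + ξ)
      ≤ ∑ a ∈ univ.filter (fun a => a ≠ astar), (θ a + ξ) := by
    apply Finset.sum_le_sum_of_subset_of_nonneg
    · intro a ha
      simp only [mem_filter] at ha ⊢
      exact ⟨mem_univ a, fun h => hne (ha.2 ▸ congrFun h i)⟩
    · intro a _ _
      exact add_nonneg (hθ0 a) (le_of_lt hξ)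
  have h3 : θhat astar ≤ ∑ a ∈ univ.filter (fun a => a i = astar i), θhat a := by
    apply Finset.single_le_sum (f := θhat) (fun a _ => hθhat0 a)
    simp
  linarith
end
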